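/- Let s > 0 and let f : ℝⁿ → [0,∞) be measurable with f(0) > 0, and let z ∈ ℝⁿ. Then: (1) for every y ∈ ℝⁿ, L_s(f_z)(y) = (1 + s⟨z,y⟩)₊^{1/s} · L_s f(y/(1 + s⟨z,y⟩)) when 1 + s⟨z,y⟩ > 0, and L_s(f_z)(y) = 0 when 1 + s⟨z,y⟩ ≤ 0; (2) if moreover f(z) > 0, then {x : L_s f(x) > 0} ⊆ {x : 1 − s⟨z,x⟩ > 0} and ∫ L_s(f_z)(y) dy = ∫ L_s f(x) · (1 − s⟨z,x⟩)^{−(n+1+1/s)} dx. -/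

import Mathlib

open MeasureTheory Set
open scoped RealInnerProductSpace ENNReal

/-- For `s ≠ 0`, the `s`-concave dual of a nonnegative function `g`:
`L_s g(y) = inf {(1 − s⟨x,y⟩)₊^{1/s} / g(x) : g(x) > 0}`. -/
noncomputable def Ls {n : ℕ} (s : ℝ) (g : EuclideanSpace ℝ (Fin n) → ℝ)
    (y : EuclideanSpace ℝ (Fin n)) : ℝ :=
  ⨅ x : {x : EuclideanSpace ℝ (Fin n) // 0 < g x},
    (max (1 - s * ⟪x.1, y⟫) 0) ^ (1 / s) / g x.1

section Helpers

variable {n : ℕ}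

lemma Ls_bddBelow (s : ℝ) (g : EuclideanSpace ℝ (Fin n) → ℝ) (y : EuclideanSpace ℝ (Fin n)) :
    BddBelow (Set.range fun x : {x : EuclideanSpace ℝ (Fin n) // 0 < g x} =>
      (max (1 - s * ⟪x.1, y⟫) 0) ^ (1 / s) / g x.1) := by
  refine ⟨0, ?_⟩
  rintro r ⟨x, rfl⟩
  exact div_nonneg (Real.rpow_nonneg (le_max_right _ _) _) x.2.le

lemma Ls_nonneg (s : ℝ) (g : EuclideanSpace ℝ (Fin n) → ℝ) (y : EuclideanSpace ℝ (Fin n)) :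
    0 ≤ Ls s g y :=
  Real.iInf_nonneg fun x => div_nonneg (Real.rpow_nonneg (le_max_right _ _) _) x.2.le

lemma Ls_le (s : ℝ) (g : EuclideanSpace ℝ (Fin n) → ℝ) (y : EuclideanSpace ℝ (Fin n))
    {x : EuclideanSpace ℝ (Fin n)} (hx : 0 < g x) :
    Ls s g y ≤ (max (1 - s * ⟪x, y⟫) 0) ^ (1 / s) / g x :=
  ciInf_le (Ls_bddBelow s g y) ⟨x, hx⟩

lemma Ls_eq_zero {s : ℝ} (hs : 0 < s) (g : EuclideanSpace ℝ (Fin n) → ℝ)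
    {x : EuclideanSpace ℝ (Fin n)} (hx : 0 < g x) {y : EuclideanSpace ℝ (Fin n)}
    (h : 1 - s * ⟪x, y⟫ ≤ 0) : Ls s g y = 0 := by
  refine le_antisymm ((Ls_le s g y hx).trans_eq ?_) (Ls_nonneg s g y)
  rw [max_eq_right h, Real.zero_rpow (one_div_ne_zero hs.ne'), zero_div]

lemma Ls_translate_pos {s : ℝ} (hs : 0 < s) (f : EuclideanSpace ℝ (Fin n) → ℝ)
    (hf0 : 0 < f 0) (z y : EuclideanSpace ℝ (Fin n)) (hc : 0 < 1 + s * ⟪z, y⟫) :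
    Ls s (fun x => f (x + z)) y
      = (1 + s * ⟪z, y⟫) ^ (1 / s) * Ls s f ((1 + s * ⟪z, y⟫)⁻¹ • y) := by
  set c : ℝ := 1 + s * ⟪z, y⟫ with hcdef
  haveI : Nonempty {u : EuclideanSpace ℝ (Fin n) // 0 < f u} := ⟨⟨0, hf0⟩⟩
  set e : {u : EuclideanSpace ℝ (Fin n) // 0 < f u} →
      {x : EuclideanSpace ℝ (Fin n) // 0 < f (x + z)} :=
    fun u => ⟨u.1 - z, by simpa using u.2⟩ with he
  have hsurj : Function.Surjective e := by
    rintro ⟨x, hx⟩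
    exact ⟨⟨x + z, hx⟩, by simp [he]⟩
  set h : {x : EuclideanSpace ℝ (Fin n) // 0 < f (x + z)} → ℝ :=
    fun x => (max (1 - s * ⟪x.1, y⟫) 0) ^ (1 / s) / f (x.1 + z) with hh
  have h1 : Ls s (fun x => f (x + z)) y = ⨅ u, h (e u) := by
    rw [Ls, iInf, iInf, ← hsurj.range_comp h]
    rfl
  rw [h1, Ls, Real.mul_iInf_of_nonneg (Real.rpow_nonneg hc.le _)]
  refine iInf_congr fun u => ?_
  have h2 : u.1 - z + z = u.1 := sub_add_cancel _ _
  have h3 : ⟪u.1, c⁻¹ • y⟫ = c⁻¹ * ⟪u.1, y⟫ := real_inner_smul_right _ _ _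
  have h4 : c * (1 - s * (c⁻¹ * ⟪u.1, y⟫)) = 1 - s * ⟪u.1 - z, y⟫ := by
    rw [inner_sub_left, hcdef]
    have hc' : (0:ℝ) < 1 + s * ⟪z, y⟫ := hc
    generalize hq : ⟪z, y⟫ = q at hc' ⊢
    generalize ⟪u.1, y⟫ = p
    have := hc'.ne'
    field_simp
    ring
  rw [hh]
  simp only [he, h2, h3]
  rw [← mul_div_assoc, ← Real.mul_rpow hc.le (le_max_right _ _),
    mul_max_of_nonneg _ _ hc.le, mul_zero, h4]



lemma hasFDerivAt_T (s : ℝ) (z x : EuclideanSpace ℝ (Fin n)) (hd : 1 - s * ⟪z, x⟫ ≠ 0) :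
    HasFDerivAt (fun w : EuclideanSpace ℝ (Fin n) => (1 - s * ⟪z, w⟫)⁻¹ • w)
      ((1 - s * ⟪z, x⟫)⁻¹ • ContinuousLinearMap.id ℝ (EuclideanSpace ℝ (Fin n)) +
        ((-((1 - s * ⟪z, x⟫) ^ 2)⁻¹) • -(s • innerSL ℝ z)).smulRight x) x := by
  have h0 : HasFDerivAt (fun w : EuclideanSpace ℝ (Fin n) => ⟪z, w⟫) (innerSL ℝ z) x :=
    (innerSL ℝ z).hasFDerivAt
  have h1 : HasFDerivAt (fun w : EuclideanSpace ℝ (Fin n) => 1 - s * ⟪z, w⟫)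
      (-(s • innerSL ℝ z)) x := (h0.const_mul s).const_sub 1
  have h2 : HasFDerivAt (fun w : EuclideanSpace ℝ (Fin n) => (1 - s * ⟪z, w⟫)⁻¹)
      ((-((1 - s * ⟪z, x⟫) ^ 2)⁻¹) • -(s • innerSL ℝ z)) x :=
    (hasDerivAt_inv hd).comp_hasFDerivAt x h1
  exact h2.smul (hasFDerivAt_id x)

lemma detA (s : ℝ) (z x : EuclideanSpace ℝ (Fin n)) {d : ℝ} (hd : d ≠ 0)
    (hsum : d + s * ⟪z, x⟫ = 1) :
    ((d⁻¹ • ContinuousLinearMap.id ℝ (EuclideanSpace ℝ (Fin n)) +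
      ((-(d ^ 2)⁻¹) • -(s • innerSL ℝ z)).smulRight x) :
        EuclideanSpace ℝ (Fin n) →L[ℝ] EuclideanSpace ℝ (Fin n)).det = d⁻¹ ^ (n + 1) := by
  classical
  set L : EuclideanSpace ℝ (Fin n) →L[ℝ] EuclideanSpace ℝ (Fin n) :=
    d⁻¹ • ContinuousLinearMap.id ℝ (EuclideanSpace ℝ (Fin n)) +
      ((-(d ^ 2)⁻¹) • -(s • innerSL ℝ z)).smulRight x with hL
  set b := (EuclideanSpace.basisFun (Fin n) ℝ).toBasis with hb
  have hM : LinearMap.toMatrix b b L.toLinearMap =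
      d⁻¹ • (1 + Matrix.replicateCol Unit (fun i => s * d⁻¹ * x i) * Matrix.replicateRow Unit (fun j => z j)) := by
    ext i j
    simp [LinearMap.toMatrix_apply, hL, hb, Matrix.mul_apply, Matrix.one_apply,
      EuclideanSpace.basisFun_apply, EuclideanSpace.basisFun_repr,
      EuclideanSpace.single_apply, Matrix.add_apply, Matrix.smul_apply,
      EuclideanSpace.inner_single_right]
    split_ifs <;> field_simp <;> ring
  have hdet := LinearMap.det_toMatrix b L.toLinearMap
  rw [hM] at hdet
  rw [ContinuousLinearMap.det, ← hdet, Matrix.det_smul, Matrix.det_one_add_replicateCol_mul_replicateRow]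
  have hdot : dotProduct (fun j => z j) (fun i => s * d⁻¹ * x i) = s * d⁻¹ * ⟪z, x⟫ := by
    simp only [dotProduct, PiLp.inner_apply, RCLike.inner_apply, starRingEnd_apply,
      star_trivial, Finset.mul_sum]
    exact Finset.sum_congr rfl fun i _ => by ring
  rw [hdot, Fintype.card_fin]
  have h1 : 1 + s * d⁻¹ * ⟪z, x⟫ = d⁻¹ := by
    have hp := hsum
    generalize ⟪z, x⟫ = p at hp ⊢
    field_simp
    linarith
  rw [h1, pow_succ]


lemma aux_cT (s : ℝ) (z x : EuclideanSpace ℝ (Fin n)) (hd : 1 - s * ⟪z, x⟫ ≠ 0) :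
    1 + s * ⟪z, (1 - s * ⟪z, x⟫)⁻¹ • x⟫ = (1 - s * ⟪z, x⟫)⁻¹ := by
  rw [real_inner_smul_right]
  generalize hp : ⟪z, x⟫ = p at hd ⊢
  field_simp
  ring

lemma aux_dW (s : ℝ) (z y : EuclideanSpace ℝ (Fin n)) (hc : 1 + s * ⟪z, y⟫ ≠ 0) :
    1 - s * ⟪z, (1 + s * ⟪z, y⟫)⁻¹ • y⟫ = (1 + s * ⟪z, y⟫)⁻¹ := by
  rw [real_inner_smul_right]
  generalize hp : ⟪z, y⟫ = p at hc ⊢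
  field_simp
  ring

end Helpers

/-- Properties of the `s`-concave dual of a translate `f_z = f(· + z)`, for `s > 0` and
`f ≥ 0` measurable with `f(0) > 0`:
(1) `L_s(f_z)(y) = (1 + s⟨z,y⟩)₊^{1/s} · L_s f(y/(1 + s⟨z,y⟩))` when `1 + s⟨z,y⟩ > 0`,
and `L_s(f_z)(y) = 0` when `1 + s⟨z,y⟩ ≤ 0`;
(2) if moreover `f(z) > 0`, then `{L_s f > 0} ⊆ {x : 1 − s⟨z,x⟩ > 0}` and
`∫ L_s(f_z)(y) dy = ∫ L_s f(x) · (1 − s⟨z,x⟩)^{−(n+1+1/s)} dx`. -/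
theorem Ls_translate (n : ℕ) (s : ℝ) (hs : 0 < s)
    (f : EuclideanSpace ℝ (Fin n) → ℝ) (hfmeas : Measurable f)
    (hfnonneg : ∀ x, 0 ≤ f x) (hf0 : 0 < f 0) (z : EuclideanSpace ℝ (Fin n)) :
    ((∀ y : EuclideanSpace ℝ (Fin n),
        (0 < 1 + s * ⟪z, y⟫ →
          Ls s (fun x => f (x + z)) y
            = (1 + s * ⟪z, y⟫) ^ (1 / s) * Ls s f ((1 + s * ⟪z, y⟫)⁻¹ • y))
        ∧ (1 + s * ⟪z, y⟫ ≤ 0 → Ls s (fun x => f (x + z)) y = 0))) ∧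
    (0 < f z →
      ({x | 0 < Ls s f x} ⊆ {x | 0 < 1 - s * ⟪z, x⟫}) ∧
      (∫⁻ y, ENNReal.ofReal (Ls s (fun x => f (x + z)) y)
        = ∫⁻ x, ENNReal.ofReal (Ls s f x)
            * ENNReal.ofReal ((1 - s * ⟪z, x⟫) ^ (-((n : ℝ) + 1 + 1 / s))))) := by
  have part1 : ∀ y : EuclideanSpace ℝ (Fin n),
      (0 < 1 + s * ⟪z, y⟫ →
        Ls s (fun x => f (x + z)) y
          = (1 + s * ⟪z, y⟫) ^ (1 / s) * Ls s f ((1 + s * ⟪z, y⟫)⁻¹ • y))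
      ∧ (1 + s * ⟪z, y⟫ ≤ 0 → Ls s (fun x => f (x + z)) y = 0) := by
    intro y
    refine ⟨fun hc => Ls_translate_pos hs f hf0 z y hc, fun hc => ?_⟩
    refine Ls_eq_zero hs (fun x => f (x + z)) (x := -z) (by simpa using hf0) ?_
    rw [inner_neg_left]
    linarith
  refine ⟨part1, fun hfz => ?_⟩
  have part2a : {x | 0 < Ls s f x} ⊆ {x : EuclideanSpace ℝ (Fin n) | 0 < 1 - s * ⟪z, x⟫} := by
    intro x hx
    by_contra hle
    rw [Set.mem_setOf_eq, not_lt] at hle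
    rw [Set.mem_setOf_eq, Ls_eq_zero hs f hfz hle] at hx
    exact lt_irrefl _ hx
  refine ⟨part2a, ?_⟩
  -- notation
  set F : EuclideanSpace ℝ (Fin n) → ℝ≥0∞ :=
    fun y => ENNReal.ofReal (Ls s (fun x => f (x + z)) y) with hF
  set G : EuclideanSpace ℝ (Fin n) → ℝ≥0∞ :=
    fun x => ENNReal.ofReal (Ls s f x)
      * ENNReal.ofReal ((1 - s * ⟪z, x⟫) ^ (-((n : ℝ) + 1 + 1 / s))) with hG
  set S : Set (EuclideanSpace ℝ (Fin n)) := {x | 0 < 1 - s * ⟪z, x⟫} with hSdef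
  set U : Set (EuclideanSpace ℝ (Fin n)) := {y | 0 < 1 + s * ⟪z, y⟫} with hUdef
  set T : EuclideanSpace ℝ (Fin n) → EuclideanSpace ℝ (Fin n) :=
    fun x => (1 - s * ⟪z, x⟫)⁻¹ • x with hTdef
  set A : EuclideanSpace ℝ (Fin n) →
      (EuclideanSpace ℝ (Fin n) →L[ℝ] EuclideanSpace ℝ (Fin n)) :=
    fun x => (1 - s * ⟪z, x⟫)⁻¹ • ContinuousLinearMap.id ℝ (EuclideanSpace ℝ (Fin n)) +
      ((-((1 - s * ⟪z, x⟫) ^ 2)⁻¹) • -(s • innerSL ℝ z)).smulRight x with hA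
  have hicont : Continuous fun x : EuclideanSpace ℝ (Fin n) => ⟪z, x⟫ :=
    continuous_const.inner continuous_id
  have hdcont : Continuous fun x : EuclideanSpace ℝ (Fin n) => 1 - s * ⟪z, x⟫ :=
    continuous_const.sub (continuous_const.mul hicont)
  have hccont : Continuous fun y : EuclideanSpace ℝ (Fin n) => 1 + s * ⟪z, y⟫ :=
    continuous_const.add (continuous_const.mul hicont)
  have hSm : MeasurableSet S := (isOpen_lt continuous_const hdcont).measurableSet
  have hUm : MeasurableSet U := (isOpen_lt continuous_const hccont).measurableSet
  have hderiv : ∀ x ∈ S, HasFDerivWithinAt T (A x) S x := fun x hx =>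
    (hasFDerivAt_T s z x (ne_of_gt hx)).hasFDerivWithinAt
  have hleft : ∀ x ∈ S, (1 + s * ⟪z, T x⟫)⁻¹ • T x = x := by
    intro x hx
    have hdx : (0 : ℝ) < 1 - s * ⟪z, x⟫ := hx
    rw [hTdef]
    simp only
    rw [aux_cT s z x hdx.ne', inv_inv, smul_smul, mul_inv_cancel₀ hdx.ne', one_smul]
  have hinj : Set.InjOn T S := by
    intro a ha b hb hab
    rw [← hleft a ha, ← hleft b hb, hab]
  have himg : T '' S = U := by
    ext y
    constructor
    · rintro ⟨x, hx, rfl⟩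
      have hdx : (0 : ℝ) < 1 - s * ⟪z, x⟫ := hx
      show 0 < 1 + s * ⟪z, T x⟫
      rw [hTdef]
      simp only
      rw [aux_cT s z x hdx.ne']
      exact inv_pos.2 hdx
    · intro hy
      have hcy : (0 : ℝ) < 1 + s * ⟪z, y⟫ := hy
      refine ⟨(1 + s * ⟪z, y⟫)⁻¹ • y, ?_, ?_⟩
      · show 0 < 1 - s * ⟪z, (1 + s * ⟪z, y⟫)⁻¹ • y⟫
        rw [aux_dW s z y hcy.ne']
        exact inv_pos.2 hcy
      · show (1 - s * ⟪z, (1 + s * ⟪z, y⟫)⁻¹ • y⟫)⁻¹ • ((1 + s * ⟪z, y⟫)⁻¹ • y) = y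
        rw [aux_dW s z y hcy.ne', inv_inv, smul_smul, mul_inv_cancel₀ hcy.ne', one_smul]
  have hcv := lintegral_image_eq_lintegral_abs_det_fderiv_mul volume hSm hderiv hinj F
  rw [himg] at hcv
  have hUczero : ∫⁻ y in Uᶜ, F y = 0 := by
    have h0 : ∀ᵐ y ∂(volume : Measure (EuclideanSpace ℝ (Fin n))),
        y ∈ Uᶜ → F y = (fun _ => (0 : ℝ≥0∞)) y := by
      refine ae_of_all _ fun y hy => ?_
      have hy' : 1 + s * ⟪z, y⟫ ≤ 0 := not_lt.1 hy
      show ENNReal.ofReal (Ls s (fun x => f (x + z)) y) = 0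
      rw [(part1 y).2 hy', ENNReal.ofReal_zero]
    rw [setLIntegral_congr_fun_ae hUm.compl h0, lintegral_zero]
  have hSczero : ∫⁻ x in Sᶜ, G x = 0 := by
    have h0 : ∀ᵐ x ∂(volume : Measure (EuclideanSpace ℝ (Fin n))),
        x ∈ Sᶜ → G x = (fun _ => (0 : ℝ≥0∞)) x := by
      refine ae_of_all _ fun x hx => ?_
      have hx' : 1 - s * ⟪z, x⟫ ≤ 0 := not_lt.1 hx
      show ENNReal.ofReal (Ls s f x)
        * ENNReal.ofReal ((1 - s * ⟪z, x⟫) ^ (-((n : ℝ) + 1 + 1 / s))) = 0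
      rw [Ls_eq_zero hs f hfz hx', ENNReal.ofReal_zero, zero_mul]
    rw [setLIntegral_congr_fun_ae hSm.compl h0, lintegral_zero]
  have key : ∀ x ∈ S, ENNReal.ofReal |(A x).det| * F (T x) = G x := by
    intro x hx
    have hdx : (0 : ℝ) < 1 - s * ⟪z, x⟫ := hx
    have hdet : (A x).det = (1 - s * ⟪z, x⟫)⁻¹ ^ (n + 1) :=
      detA s z x hdx.ne' (by ring)
    have habs : |(A x).det| = (1 - s * ⟪z, x⟫)⁻¹ ^ (n + 1) := by
      rw [hdet]
      exact abs_of_pos (pow_pos (inv_pos.2 hdx) _)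
    have hcTx : 0 < 1 + s * ⟪z, T x⟫ := by
      rw [hTdef]; simp only
      rw [aux_cT s z x hdx.ne']
      exact inv_pos.2 hdx
    have hLsT : Ls s (fun x => f (x + z)) (T x)
        = ((1 - s * ⟪z, x⟫)⁻¹) ^ (1 / s) * Ls s f x := by
      rw [Ls_translate_pos hs f hf0 z (T x) hcTx]
      rw [show (1 + s * ⟪z, T x⟫) = (1 - s * ⟪z, x⟫)⁻¹ from by
        rw [hTdef]; simp only; exact aux_cT s z x hdx.ne']
      congr 1
      rw [inv_inv]
      have harg : (1 - s * ⟪z, x⟫) • T x = x := by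
        show (1 - s * ⟪z, x⟫) • ((1 - s * ⟪z, x⟫)⁻¹ • x) = x
        rw [smul_smul, mul_inv_cancel₀ hdx.ne', one_smul]
      rw [harg]
    have hpow : ((1 - s * ⟪z, x⟫)⁻¹ : ℝ) ^ (n + 1) * ((1 - s * ⟪z, x⟫)⁻¹) ^ (1 / s)
        = (1 - s * ⟪z, x⟫) ^ (-((n : ℝ) + 1 + 1 / s)) := by
      rw [← Real.rpow_natCast ((1 - s * ⟪z, x⟫)⁻¹) (n + 1),
        ← Real.rpow_add (inv_pos.2 hdx), Real.inv_rpow hdx.le, ← Real.rpow_neg hdx.le]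
      congr 1
      push_cast
      ring
    rw [hF, hG]
    simp only
    rw [habs, hLsT, ← ENNReal.ofReal_mul (by positivity),
      ← ENNReal.ofReal_mul (Ls_nonneg s f x)]
    congr 1
    rw [← mul_assoc, hpow]
    ring
  calc ∫⁻ y, F y = (∫⁻ y in U, F y) + ∫⁻ y in Uᶜ, F y := (lintegral_add_compl F hUm).symm
    _ = ∫⁻ y in U, F y := by rw [hUczero, add_zero]
    _ = ∫⁻ x in S, ENNReal.ofReal |(A x).det| * F (T x) := hcv
    _ = ∫⁻ x in S, G x := setLIntegral_congr_fun_ae hSm (ae_of_all _ key)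
    _ = (∫⁻ x in S, G x) + ∫⁻ x in Sᶜ, G x := by rw [hSczero, add_zero]
    _ = ∫⁻ x, G x := lintegral_add_compl G hSm
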